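/- arXiv:2408.01763 — 2 statements merged into one kernel-verified Lean document; each statement's English description precedes it below -/
import Mathlib

section
/- The Jordan–Kronecker function satisfies f(a,b) = f(b,a) for all a, b in the region of convergence. -/
open Complex Filter Topology

/-- The q-Pochhammer symbol `(x; q)_∞ = ∏_{i ≥ 0} (1 - x qⁱ)`. -/
noncomputable def qPoch (q x : ℂ) : ℂ := ∏' i : ℕ, (1 - x * q ^ i)

/-- The Jordan–Kronecker function `f(a,b) = Σ_{n ∈ ℤ} aⁿ / (1 - b qⁿ)`. -/
noncomputable def jk (q a b : ℂ) : ℂ := ∑' n : ℤ, a ^ n / (1 - b * q ^ n)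

/-- The Lambert series sum
`l(x) = Σ_{r ≥ 0} x qʳ/(1 - x qʳ) - Σ_{r ≥ 1} x⁻¹ qʳ/(1 - x⁻¹ qʳ)`. -/
noncomputable def lam (q x : ℂ) : ℂ :=
  (∑' r : ℕ, x * q ^ r / (1 - x * q ^ r))
    - ∑' r : ℕ, x⁻¹ * q ^ (r + 1) / (1 - x⁻¹ * q ^ (r + 1))

private lemma jk_eq_double (q a b : ℂ) (hq0 : 0 < ‖q‖) (hq1 : ‖q‖ < 1)
    (haq : ‖q‖ < ‖a‖) (ha1 : ‖a‖ < 1)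
    (hbq : ‖q‖ < ‖b‖) (hb1 : ‖b‖ < 1) :
    jk q a b = (∑' p : ℕ × ℕ, a ^ p.1 * b ^ p.2 * q ^ (p.1 * p.2))
      - ∑' p : ℕ × ℕ, a⁻¹ ^ (p.1 + 1) * b⁻¹ ^ (p.2 + 1) * q ^ ((p.1 + 1) * (p.2 + 1)) := by
  have hq0' : q ≠ 0 := by simpa using hq0.ne'
  have ha0 : a ≠ 0 := by intro h; rw [h] at haq; simp at haq; linarith
  have hb0 : b ≠ 0 := by intro h; rw [h] at hbq; simp at hbq; linarith
  have hqn : ‖q‖ < 1 := hq1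
  have han : ‖a‖ < 1 := ha1
  have hbn : ‖b‖ < 1 := hb1
  set F : ℕ × ℕ → ℂ := fun p => a ^ p.1 * b ^ p.2 * q ^ (p.1 * p.2) with hFdef
  set G : ℕ × ℕ → ℂ := fun p => a⁻¹ ^ (p.1 + 1) * b⁻¹ ^ (p.2 + 1) * q ^ ((p.1 + 1) * (p.2 + 1)) with hGdef
  have hga : Summable (fun n : ℕ => ‖a‖ ^ n) := summable_geometric_of_lt_one (norm_nonneg a) han
  have hgb : Summable (fun n : ℕ => ‖b‖ ^ n) := summable_geometric_of_lt_one (norm_nonneg b) hbn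
  have hprodab : Summable (fun p : ℕ × ℕ => ‖a‖ ^ p.1 * ‖b‖ ^ p.2) :=
    summable_mul_of_summable_norm (by simpa only [Real.norm_eq_abs] using hga.abs)
      (by simpa only [Real.norm_eq_abs] using hgb.abs)
  have hF : Summable F := by
    apply Summable.of_norm_bounded hprodab
    intro p
    have : ‖F p‖ = ‖a‖ ^ p.1 * ‖b‖ ^ p.2 * ‖q‖ ^ (p.1 * p.2) := by
      simp [hFdef, norm_mul, norm_pow]
    rw [this]
    exact mul_le_of_le_one_right (by positivity) (pow_le_one₀ (norm_nonneg q) hqn.le)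
  have hr1 : ‖q‖ / ‖a‖ < 1 := (div_lt_one (lt_trans hq0 haq)).2 haq
  have hs1 : ‖q‖ / ‖b‖ < 1 := (div_lt_one (lt_trans hq0 hbq)).2 hbq
  have hgr : Summable (fun n : ℕ => (‖q‖ / ‖a‖) ^ n) :=
    summable_geometric_of_lt_one (by positivity) hr1
  have hgs : Summable (fun n : ℕ => (‖q‖ / ‖b‖) ^ n) :=
    summable_geometric_of_lt_one (by positivity) hs1
  have hprodrs : Summable (fun p : ℕ × ℕ => (‖q‖ / ‖a‖) ^ p.1 * (‖q‖ / ‖b‖) ^ p.2) :=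
    summable_mul_of_summable_norm (by simpa only [Real.norm_eq_abs] using hgr.abs)
      (by simpa only [Real.norm_eq_abs] using hgs.abs)
  have hG : Summable G := by
    apply Summable.of_norm_bounded
      (hprodrs.mul_left (‖a‖⁻¹ * ‖b‖⁻¹))
    intro p
    have hna : (0:ℝ) < ‖a‖ := lt_trans hq0 haq
    have hnb : (0:ℝ) < ‖b‖ := lt_trans hq0 hbq
    have h1 : ‖G p‖ = ‖a‖⁻¹ ^ (p.1 + 1) * ‖b‖⁻¹ ^ (p.2 + 1) * ‖q‖ ^ ((p.1 + 1) * (p.2 + 1)) := by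
      simp [hGdef, norm_mul, norm_pow, norm_inv]
    rw [h1]
    have h2 : ‖q‖ ^ ((p.1 + 1) * (p.2 + 1)) ≤ ‖q‖ ^ (p.1 + p.2) :=
      pow_le_pow_of_le_one (norm_nonneg q) hqn.le (by nlinarith)
    calc ‖a‖⁻¹ ^ (p.1 + 1) * ‖b‖⁻¹ ^ (p.2 + 1) * ‖q‖ ^ ((p.1 + 1) * (p.2 + 1))
        ≤ ‖a‖⁻¹ ^ (p.1 + 1) * ‖b‖⁻¹ ^ (p.2 + 1) * ‖q‖ ^ (p.1 + p.2) :=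
          mul_le_mul_of_nonneg_left h2 (by positivity)
      _ = ‖a‖⁻¹ * ‖b‖⁻¹ * ((‖q‖ / ‖a‖) ^ p.1 * (‖q‖ / ‖b‖) ^ p.2) := by
          rw [pow_succ, pow_succ, pow_add, div_pow, div_pow]
          simp only [inv_pow]
          field_simp
  have hpos : ∀ n : ℕ, HasSum (fun m : ℕ => F (n, m)) (a ^ (n : ℤ) / (1 - b * q ^ (n : ℤ))) := by
    intro n
    have hlt : ‖b * q ^ n‖ < 1 := by
      rw [norm_mul, norm_pow]
      exact lt_of_le_of_lt (mul_le_of_le_one_right (norm_nonneg b)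
        (pow_le_one₀ (norm_nonneg q) hqn.le)) hbn
    have h := (hasSum_geometric_of_norm_lt_one hlt).mul_left (a ^ n)
    have heq : (fun m : ℕ => a ^ n * (b * q ^ n) ^ m) = fun m : ℕ => F (n, m) := by
      funext m
      simp only [hFdef, mul_pow, ← pow_mul]
      ring
    rw [heq] at h
    rwa [zpow_natCast, zpow_natCast, div_eq_mul_inv]
  have hneg : ∀ k : ℕ, HasSum (fun m : ℕ => -G (k, m))
      (a ^ (-((k : ℤ) + 1)) / (1 - b * q ^ (-((k : ℤ) + 1)))) := by
    intro k
    have hlt : ‖b⁻¹ * q ^ (k + 1)‖ < 1 := by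
      rw [norm_mul, norm_inv, norm_pow]
      calc ‖b‖⁻¹ * ‖q‖ ^ (k + 1) ≤ ‖b‖⁻¹ * ‖q‖ := by
            apply mul_le_mul_of_nonneg_left _ (by positivity)
            calc ‖q‖ ^ (k+1) ≤ ‖q‖ ^ 1 := pow_le_pow_of_le_one (norm_nonneg q) hqn.le (by omega)
              _ = ‖q‖ := pow_one _
        _ = ‖q‖ / ‖b‖ := by rw [inv_mul_eq_div]
        _ < 1 := hs1
    have hden : (1 : ℂ) - b⁻¹ * q ^ (k + 1) ≠ 0 := by
      rw [sub_ne_zero]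
      intro h
      rw [← h] at hlt
      simp at hlt
    have h := (hasSum_geometric_of_norm_lt_one hlt).mul_left
      (-(a⁻¹ ^ (k + 1) * b⁻¹ * q ^ (k + 1)))
    have heq : (fun m : ℕ => -(a⁻¹ ^ (k + 1) * b⁻¹ * q ^ (k + 1)) * (b⁻¹ * q ^ (k + 1)) ^ m)
        = fun m : ℕ => -G (k, m) := by
      funext m
      simp only [hGdef, mul_pow, ← pow_mul]
      rw [pow_succ b⁻¹, Nat.mul_add, pow_add, Nat.mul_one]
      ring
    rw [heq] at h
    have hqk : (q : ℂ) ^ (k + 1) ≠ 0 := pow_ne_zero _ hq0'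
    have hden2 : (1 : ℂ) - b * (q ^ (k + 1))⁻¹ ≠ 0 := by
      intro h0
      apply hden
      have h' := sub_eq_zero.mp h0
      have hb' : b = q ^ (k + 1) := by
        field_simp at h'
        exact h'.symm
      rw [hb', inv_mul_cancel₀ hqk, sub_self]
    have hval : a ^ (-((k : ℤ) + 1)) / (1 - b * q ^ (-((k : ℤ) + 1)))
        = -(a⁻¹ ^ (k + 1) * b⁻¹ * q ^ (k + 1)) * (1 - b⁻¹ * q ^ (k + 1))⁻¹ := by
      have hcast : (-((k : ℤ) + 1)) = -((k + 1 : ℕ) : ℤ) := by push_cast; ring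
      rw [hcast, zpow_neg, zpow_natCast, zpow_neg, zpow_natCast,
        show -(a⁻¹ ^ (k + 1) * b⁻¹ * q ^ (k + 1)) * (1 - b⁻¹ * q ^ (k + 1))⁻¹
          = -(a⁻¹ ^ (k + 1) * b⁻¹ * q ^ (k + 1)) / (1 - b⁻¹ * q ^ (k + 1))
          from (div_eq_mul_inv _ _).symm,
        div_eq_div_iff hden2 hden]
      simp only [inv_pow]
      field_simp
      ring
    rwa [hval]
  have hS1 : HasSum (fun n : ℕ => a ^ (n : ℤ) / (1 - b * q ^ (n : ℤ))) (∑' p, F p) :=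
    hF.hasSum.prod_fiberwise hpos
  have hS2 : HasSum (fun k : ℕ => a ^ (-((k : ℤ) + 1)) / (1 - b * q ^ (-((k : ℤ) + 1))))
      (-∑' p, G p) := hG.hasSum.neg.prod_fiberwise hneg
  have htotal : HasSum (fun n : ℤ => a ^ n / (1 - b * q ^ n)) ((∑' p, F p) + -∑' p, G p) :=
    HasSum.of_nat_of_neg_add_one hS1 hS2
  rw [jk, htotal.tsum_eq, ← sub_eq_add_neg]

theorem jk_symm (q a b : ℂ) (hq0 : 0 < ‖q‖) (hq1 : ‖q‖ < 1)
    (haq : ‖q‖ < ‖a‖) (ha1 : ‖a‖ < 1)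
    (hbq : ‖q‖ < ‖b‖) (hb1 : ‖b‖ < 1)
    (ha : ∀ n : ℤ, a ≠ q ^ n) (hb : ∀ n : ℤ, b ≠ q ^ n) :
    jk q a b = jk q b a := by
  rw [jk_eq_double q a b hq0 hq1 haq ha1 hbq hb1,
    jk_eq_double q b a hq0 hq1 hbq hb1 haq ha1]
  congr 1
  · rw [← Equiv.tsum_eq (Equiv.prodComm ℕ ℕ) (fun p : ℕ × ℕ => a ^ p.1 * b ^ p.2 * q ^ (p.1 * p.2))]
    apply tsum_congr
    intro p
    simp only [Equiv.prodComm_apply, Prod.fst_swap, Prod.snd_swap]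
    rw [Nat.mul_comm p.2 p.1]
    ring
  · rw [← Equiv.tsum_eq (Equiv.prodComm ℕ ℕ)
      (fun p : ℕ × ℕ => a⁻¹ ^ (p.1 + 1) * b⁻¹ ^ (p.2 + 1) * q ^ ((p.1 + 1) * (p.2 + 1)))]
    apply tsum_congr
    intro p
    simp only [Equiv.prodComm_apply, Prod.fst_swap, Prod.snd_swap]
    rw [Nat.mul_comm (p.2 + 1) (p.1 + 1)]
    ring
end

section
/- The limit as a → 1 of (f(a,b) − 1/(1−a)) equals l(b) := Σ_{n≥0} bq^n/(1−bq^n) − Σ_{n≥1} b^{-1}q^n/(1−b^{-1}q^n). -/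
open Complex Filter Topology

/-- Uniform positive lower bound on `|1 - c qᵏ|` when `c qᵏ` is never `1` and `|q| < 1`. -/
private lemma abs_one_sub_lb (q c : ℂ) (hq1 : ‖q‖ < 1)
    (h : ∀ k : ℕ, c * q ^ k ≠ 1) :
    ∃ δ : ℝ, 0 < δ ∧ ∀ k : ℕ, δ ≤ ‖1 - c * q ^ k‖ := by
  set f : ℕ → ℝ := fun k => ‖1 - c * q ^ k‖ with hf
  have hfpos : ∀ k, 0 < f k := by
    intro k
    have hne : (1 : ℂ) - c * q ^ k ≠ 0 := sub_ne_zero.mpr (fun hh => h k hh.symm)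
    simpa [hf] using (norm_pos_iff.mpr hne)
  have h0 : Tendsto (fun k : ℕ => c * q ^ k) atTop (nhds 0) := by
    have := (tendsto_pow_atTop_nhds_zero_of_norm_lt_one (x := q)
      (by simpa using hq1)).const_mul c
    simpa using this
  have h1 : Tendsto f atTop (nhds 1) := by
    have h2 := ((tendsto_const_nhds (x := (1:ℂ)) (f := atTop)).sub h0).norm
    simpa [hf] using h2
  have h2 : ∀ᶠ k in atTop, (1:ℝ)/2 ≤ f k :=
    Filter.Tendsto.eventually_const_le (by norm_num) h1
  obtain ⟨N, hN⟩ := h2.exists_forall_of_atTop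
  refine ⟨(Finset.range (N+1)).inf' ⟨0, by simp⟩ (fun k => min (1/2) (f k)), ?_, ?_⟩
  · refine (Finset.lt_inf'_iff _).2 ?_
    intro k _
    exact lt_min (by norm_num) (hfpos k)
  · intro k
    rcases le_or_gt N k with hk | hk
    · calc (Finset.range (N+1)).inf' ⟨0, by simp⟩ (fun k => min (1/2) (f k))
          ≤ min (1/2) (f 0) := Finset.inf'_le _ (by simp)
        _ ≤ 1/2 := min_le_left _ _
        _ ≤ f k := hN k hk
    · calc (Finset.range (N+1)).inf' ⟨0, by simp⟩ (fun k => min (1/2) (f k))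
          ≤ min (1/2) (f k) := Finset.inf'_le _ (by simp; omega)
        _ ≤ f k := min_le_right _ _

private lemma contOn_aux {c : ℕ → ℂ} {C ρ Rr : ℝ} (hρ0 : 0 ≤ ρ)
    (hRr : 0 ≤ Rr) (hρR : Rr * ρ < 1)
    (hc : ∀ k, ‖c k‖ ≤ C * ρ ^ k) :
    ContinuousOn (fun z : ℂ => ∑' k : ℕ, z ^ k * c k) (Metric.closedBall 0 Rr) := by
  have hC : 0 ≤ C := le_trans (norm_nonneg (c 0)) (by simpa using hc 0)
  refine continuousOn_tsum (u := fun k => C * (Rr * ρ) ^ k)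
    (fun k => ((continuous_pow k).continuousOn.mul continuousOn_const)) ?_ ?_
  · exact (summable_geometric_of_lt_one (by positivity) hρR).mul_left C
  · intro k z hz
    have hz' : ‖z‖ ≤ Rr := by simpa [Metric.mem_closedBall] using hz
    calc ‖z ^ k * c k‖ = ‖z‖ ^ k * ‖c k‖ := by rw [norm_mul, norm_pow]
      _ ≤ Rr ^ k * (C * ρ ^ k) :=
          mul_le_mul (pow_le_pow_left₀ (norm_nonneg z) hz' k) (hc k)
            (norm_nonneg _) (by positivity)
      _ = C * (Rr * ρ) ^ k := by rw [mul_pow]; ring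

set_option maxHeartbeats 1000000 in
theorem jk_limit_at_one (q b : ℂ) (hq0 : 0 < ‖q‖) (hq1 : ‖q‖ < 1)
    (hb0 : b ≠ 0) (hb : ∀ n : ℤ, b ≠ q ^ n) :
    Tendsto (fun a : ℂ => jk q a b - 1 / (1 - a))
      (nhdsWithin 1 {a : ℂ | ‖q‖ < ‖a‖ ∧ ‖a‖ < 1})
      (nhds (lam q b)) := by
  have hq0' : q ≠ 0 := by
    intro h; rw [h] at hq0; simp at hq0
  have hbq : ∀ k : ℕ, b * q ^ k ≠ 1 := by
    intro k hk
    apply hb (-(k : ℤ))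
    rw [zpow_neg, zpow_natCast]
    exact eq_inv_of_mul_eq_one_left hk
  have hbqnat : ∀ k : ℕ, b ≠ q ^ (k + 1) := by
    intro k hk
    apply hb ((k : ℤ) + 1)
    have h : ((k : ℤ) + 1) = ((k + 1 : ℕ) : ℤ) := by push_cast; ring
    rw [h, zpow_natCast]
    exact hk
  have hbq' : ∀ k : ℕ, (b⁻¹ * q) * q ^ k ≠ 1 := by
    intro k hk
    apply hbqnat k
    have h2 : b * (b⁻¹ * q * q ^ k) = q ^ (k + 1) := by
      rw [pow_succ]
      field_simp
    rw [← h2, hk, mul_one]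
  have hden1 : ∀ k : ℕ, (1 : ℂ) - b * q ^ k ≠ 0 :=
    fun k => sub_ne_zero.mpr (fun hh => hbq k hh.symm)
  have hden2 : ∀ k : ℕ, (1 : ℂ) - b⁻¹ * q ^ (k + 1) ≠ 0 := by
    intro k
    refine sub_ne_zero.mpr (fun hh => hbq' k ?_)
    calc b⁻¹ * q * q ^ k = b⁻¹ * q ^ (k + 1) := by rw [pow_succ]; ring
      _ = 1 := hh.symm
  set c : ℕ → ℂ := fun k => b * q ^ k / (1 - b * q ^ k) with hcdef
  set d : ℕ → ℂ := fun k => b⁻¹ * q ^ (k + 1) / (1 - b⁻¹ * q ^ (k + 1)) with hddef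
  obtain ⟨δ₁, hδ₁, hδ₁'⟩ := abs_one_sub_lb q b hq1 hbq
  obtain ⟨δ₂, hδ₂, hδ₂'⟩ := abs_one_sub_lb q (b⁻¹ * q) hq1 hbq'
  have hcb : ∀ k, ‖c k‖ ≤ (‖b‖ / δ₁) * ‖q‖ ^ k := by
    intro k
    have h1 : ‖c k‖ = ‖b‖ * ‖q‖ ^ k / ‖1 - b * q ^ k‖ := by
      rw [hcdef]
      simp [map_div₀]
    rw [h1, div_mul_eq_mul_div]
    exact div_le_div_of_nonneg_left
      (mul_nonneg (norm_nonneg b) (pow_nonneg (norm_nonneg q) k)) hδ₁ (hδ₁' k)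
  have hdb : ∀ k, ‖d k‖ ≤ (‖b‖⁻¹ * ‖q‖ / δ₂) * ‖q‖ ^ k := by
    intro k
    have he : (1 : ℂ) - b⁻¹ * q ^ (k + 1) = 1 - (b⁻¹ * q) * q ^ k := by rw [pow_succ]; ring
    have h1 : ‖d k‖ = ‖b‖⁻¹ * ‖q‖ * ‖q‖ ^ k
        / ‖1 - (b⁻¹ * q) * q ^ k‖ := by
      rw [hddef]
      simp only [he, norm_div, norm_mul, norm_pow, norm_inv, pow_succ]
      ring_nf
    rw [h1, div_mul_eq_mul_div]
    exact div_le_div_of_nonneg_left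
      (mul_nonneg (mul_nonneg (inv_nonneg.mpr (norm_nonneg b)) (norm_nonneg q))
        (pow_nonneg (norm_nonneg q) k)) hδ₂ (hδ₂' k)
  have hsc : Summable c :=
    Summable.of_norm_bounded
      ((summable_geometric_of_lt_one (norm_nonneg q) hq1).mul_left _) hcb
  have hsd : Summable d :=
    Summable.of_norm_bounded
      ((summable_geometric_of_lt_one (norm_nonneg q) hq1).mul_left _) hdb
  set r : ℝ := (1 + ‖q‖) / 2 with hrdef
  have hqr : ‖q‖ < r := by rw [hrdef]; linarith
  have hr0 : 0 < r := lt_trans hq0 hqr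
  have hr1 : r < 1 := by rw [hrdef]; linarith
  have hR1 : (1 : ℝ) ≤ r⁻¹ := by
    rw [← one_div, le_div_iff₀ hr0]; linarith
  have hF : ContinuousOn (fun z : ℂ => ∑' k : ℕ, z ^ k * c k) (Metric.closedBall 0 1) :=
    contOn_aux (norm_nonneg q) zero_le_one (by simpa using hq1) hcb
  have hG : ContinuousOn (fun z : ℂ => ∑' k : ℕ, z ^ k * d k) (Metric.closedBall 0 r⁻¹) := by
    refine contOn_aux (norm_nonneg q) (by positivity) ?_ hdb
    rw [inv_mul_lt_iff₀ hr0, mul_one]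
    exact hqr
  -- pointwise identity on the annulus
  have key : ∀ a : ℂ, ‖q‖ < ‖a‖ → ‖a‖ < 1 →
      jk q a b - 1 / (1 - a)
        = (∑' k : ℕ, a ^ k * c k) - a⁻¹ * ∑' k : ℕ, (a⁻¹) ^ k * d k := by
    intro a haq ha1
    have ha0' : (0:ℝ) < ‖a‖ := lt_trans hq0 haq
    have ha0 : a ≠ 0 := by
      intro h; rw [h] at ha0'; simp at ha0'
    have hqa : ‖q‖ / ‖a‖ < 1 := by
      rw [div_lt_one ha0']; exact haq
    have haC : ‖a‖ < 1 := by simpa using ha1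
    have hs1 : Summable (fun k : ℕ => a ^ k * c k) := by
      refine Summable.of_norm_bounded (hsc.norm) ?_
      intro k
      rw [norm_mul, norm_pow]
      calc ‖a‖ ^ k * ‖c k‖ ≤ 1 ^ k * ‖c k‖ := by gcongr
        _ = ‖c k‖ := by rw [one_pow, one_mul]
    have hsgeo : Summable (fun k : ℕ => a ^ k) :=
      summable_geometric_of_norm_lt_one haC
    have hs2 : Summable (fun k : ℕ => (a⁻¹) ^ (k + 1) * d k) := by
      have hrat : Summable (fun k : ℕ => ‖b‖⁻¹ * ‖q‖ / δ₂ / ‖a‖ *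
          (‖q‖ / ‖a‖) ^ k) :=
        (summable_geometric_of_lt_one (by positivity) hqa).mul_left _
      refine Summable.of_norm_bounded hrat ?_
      intro k
      rw [norm_mul, norm_pow, norm_inv]
      have h1 : ‖a‖ ≠ 0 := ne_of_gt ha0'
      have h2 : δ₂ ≠ 0 := ne_of_gt hδ₂
      have h3 : ‖b‖ ≠ 0 := norm_ne_zero_iff.mpr hb0
      calc ‖a‖⁻¹ ^ (k+1) * ‖d k‖
          ≤ ‖a‖⁻¹ ^ (k+1) *
            ((‖b‖⁻¹ * ‖q‖ / δ₂) * ‖q‖ ^ k) :=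
            mul_le_mul_of_nonneg_left (hdb k) (by positivity)
        _ = ‖b‖⁻¹ * ‖q‖ / δ₂ / ‖a‖ *
            (‖q‖ / ‖a‖) ^ k := by
            field_simp
            ring_nf
            rw [mul_inv_cancel₀ h1, one_mul]
    have hnat : ∀ k : ℕ, (a ^ (k : ℤ) / (1 - b * q ^ (k : ℤ))) = a ^ k + a ^ k * c k := by
      intro k
      rw [zpow_natCast, zpow_natCast, hcdef]
      have h := hden1 k
      field_simp
      ring
    have hneg : ∀ k : ℕ, (a ^ (-((k : ℤ) + 1)) / (1 - b * q ^ (-((k : ℤ) + 1))))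
        = -((a⁻¹) ^ (k + 1) * d k) := by
      intro k
      have hz : (-((k : ℤ) + 1)) = -(((k + 1 : ℕ) : ℤ)) := by push_cast; ring
      rw [hz, zpow_neg, zpow_neg, zpow_natCast, zpow_natCast]
      simp only [hddef]
      have hqk : q ^ (k + 1) ≠ 0 := pow_ne_zero _ hq0'
      have hak : a ^ (k + 1) ≠ 0 := pow_ne_zero _ ha0
      have hQb : q ^ (k + 1) - b ≠ 0 :=
        sub_ne_zero.mpr (fun hh => hbqnat k hh.symm)
      have h1 : (1 : ℂ) - b * (q ^ (k + 1))⁻¹ ≠ 0 := by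
        intro hh
        apply hQb
        rw [sub_eq_zero] at hh ⊢
        field_simp at hh
        exact hh
      have h2 := hden2 k
      have e1 : (1:ℂ) - b * (q ^ (k + 1))⁻¹ = (q ^ (k + 1) - b) / q ^ (k + 1) := by
        rw [sub_div, div_self hqk, div_eq_mul_inv]
      have e2 : (1:ℂ) - b⁻¹ * q ^ (k + 1) = -(q ^ (k + 1) - b) / b := by
        rw [neg_sub, sub_div, div_self hb0, div_eq_inv_mul]
      rw [inv_pow, e1, e2, div_div_eq_mul_div, div_div_eq_mul_div, div_neg, mul_neg, neg_neg,
        mul_div_assoc]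
      congr 2
      field_simp
    have hsum_nat : Summable (fun k : ℕ => a ^ (k : ℤ) / (1 - b * q ^ (k : ℤ))) :=
      (hsgeo.add hs1).congr (fun k => (hnat k).symm)
    have hsum_neg : Summable
        (fun k : ℕ => a ^ (-((k : ℤ) + 1)) / (1 - b * q ^ (-((k : ℤ) + 1)))) :=
      (hs2.neg).congr (fun k => (hneg k).symm)
    have hjk : jk q a b
        = ((1 - a)⁻¹ + ∑' k : ℕ, a ^ k * c k) - ∑' k : ℕ, (a⁻¹) ^ (k + 1) * d k := by
      rw [jk, tsum_of_nat_of_neg_add_one (f := fun n : ℤ => a ^ n / (1 - b * q ^ n))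
        hsum_nat hsum_neg, tsum_congr hnat,
        tsum_congr hneg, tsum_neg, Summable.tsum_add hsgeo hs1,
        tsum_geometric_of_norm_lt_one haC]
      ring
    have hfac : (∑' k : ℕ, (a⁻¹) ^ (k + 1) * d k) = a⁻¹ * ∑' k : ℕ, (a⁻¹) ^ k * d k := by
      rw [← tsum_mul_left]
      exact tsum_congr fun k => by rw [pow_succ']; ring
    rw [hjk, hfac, one_div]
    ring
  -- assemble the limit
  have hmem : (1:ℂ) ∈ Metric.closedBall (0:ℂ) 1 := by
    simp [Metric.mem_closedBall]
  have hmemR : (1:ℂ) ∈ Metric.closedBall (0:ℂ) r⁻¹ := by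
    simpa [Metric.mem_closedBall] using hR1
  set S := {a : ℂ | ‖q‖ < ‖a‖ ∧ ‖a‖ < 1} with hSdef
  have hSsub : S ⊆ Metric.closedBall 0 1 := by
    intro a ha
    simp only [Metric.mem_closedBall, dist_zero_right]
    exact ha.2.le
  have tendF : Tendsto (fun a : ℂ => ∑' k : ℕ, a ^ k * c k) (nhdsWithin 1 S)
      (nhds (∑' k : ℕ, (1:ℂ) ^ k * c k)) :=
    (hF.continuousWithinAt hmem).mono_left (nhdsWithin_mono _ hSsub)
  have tendinv : Tendsto (fun a : ℂ => a⁻¹) (nhdsWithin (1:ℂ) S) (nhds 1) := by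
    have h : Tendsto (fun a : ℂ => a⁻¹) (nhds (1:ℂ)) (nhds 1) := by
      simpa using (continuousAt_inv₀ (one_ne_zero : (1:ℂ) ≠ 0)).tendsto
    exact h.mono_left nhdsWithin_le_nhds
  have hev : ∀ᶠ a in nhdsWithin (1:ℂ) S, a⁻¹ ∈ Metric.closedBall (0:ℂ) r⁻¹ := by
    have hopen : IsOpen {a : ℂ | r < ‖a‖} :=
      isOpen_lt continuous_const continuous_norm
    have h1 : {a : ℂ | r < ‖a‖} ∈ nhds (1:ℂ) := hopen.mem_nhds (by simpa using hr1)
    filter_upwards [nhdsWithin_le_nhds h1] with a ha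
    simp only [Metric.mem_closedBall, dist_zero_right, norm_inv]
    exact inv_anti₀ hr0 ha.le
  have tendinv' : Tendsto (fun a : ℂ => a⁻¹) (nhdsWithin 1 S)
      (nhdsWithin 1 (Metric.closedBall 0 r⁻¹)) :=
    tendsto_nhdsWithin_iff.mpr ⟨tendinv, hev⟩
  have hGW : Tendsto (fun z : ℂ => ∑' k : ℕ, z ^ k * d k)
      (nhdsWithin 1 (Metric.closedBall 0 r⁻¹)) (nhds (∑' k : ℕ, (1:ℂ) ^ k * d k)) :=
    hG.continuousWithinAt hmemR
  have tendG : Tendsto (fun a : ℂ => ∑' k : ℕ, (a⁻¹) ^ k * d k) (nhdsWithin 1 S)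
      (nhds (∑' k : ℕ, (1:ℂ) ^ k * d k)) :=
    hGW.comp tendinv'
  have final : Tendsto
      (fun a : ℂ => (∑' k : ℕ, a ^ k * c k) - a⁻¹ * ∑' k : ℕ, (a⁻¹) ^ k * d k)
      (nhdsWithin 1 S)
      (nhds ((∑' k : ℕ, (1:ℂ) ^ k * c k) - 1 * ∑' k : ℕ, (1:ℂ) ^ k * d k)) :=
    tendF.sub (tendinv.mul tendG)
  have hval : (∑' k : ℕ, (1:ℂ) ^ k * c k) - 1 * ∑' k : ℕ, (1:ℂ) ^ k * d k = lam q b := by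
    simp only [one_pow, one_mul, lam, hcdef, hddef]
  rw [← hval]
  refine Tendsto.congr' ?_ final
  filter_upwards [self_mem_nhdsWithin] with a ha
  exact (key a ha.1 ha.2).symm
end
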